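/- For every vector of nonnegative locally integrable functions f⃗ = (f₁,…,f_m) on ℝⁿ there exists an η-sparse family S ⊆ D (for some η ∈ (0,1) depending only on n, m) such that pointwise I_α^D(f⃗) ≲ ∑_{S ∈ S} |S|^{α/n} ∏_{j=1}^m ( |S|^{-1} ∫_S f_j(y) dy ) 1_S. -/

import Mathlib

open MeasureTheory ENNReal

noncomputable section

variable {n : ℕ}

/-- Axis-parallel cube with lower corner `a` and side length `r` (half-open). -/
def cube (a : Fin n → ℝ) (r : ℝ) : Set (Fin n → ℝ) :=
  {y | ∀ i, a i ≤ y i ∧ y i < a i + r}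

/-- The dyadic cube `2^{-k}(m + [0,1)^n)`. -/
def dyadicCube (k : ℤ) (mv : Fin n → ℤ) : Set (Fin n → ℝ) :=
  cube (fun i => (mv i : ℝ) * (2 : ℝ) ^ (-k)) ((2 : ℝ) ^ (-k))

/-- The concentric triple `3Q` of the cube with corner `a` and side `r`. -/
def tripleCube (a : Fin n → ℝ) (r : ℝ) : Set (Fin n → ℝ) :=
  cube (fun i => a i - r) (3 * r)

/-- The Morrey norm `‖f‖_{M^{p,p₀}}`. -/
def morreyNorm (p p0 : ℝ) (f : (Fin n → ℝ) → ℝ) : ℝ≥0∞ :=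
  ⨆ (a : Fin n → ℝ) (r : ℝ) (_ : 0 < r),
    volume (cube a r) ^ (1 / p0 - 1 / p) *
      (∫⁻ x in cube a r, ENNReal.ofReal |f x| ^ p) ^ (1 / p)

/-- The product Morrey norm `‖f⃗‖_{M^{P⃗,p₀}}`. -/
def prodMorreyNorm {m : ℕ} (P : Fin m → ℝ) (p p0 : ℝ)
    (f : Fin m → (Fin n → ℝ) → ℝ) : ℝ≥0∞ :=
  ⨆ (a : Fin n → ℝ) (r : ℝ) (_ : 0 < r),
    volume (cube a r) ^ (1 / p0 - 1 / p) *
      ∏ j, (∫⁻ x in cube a r, ENNReal.ofReal |f j x| ^ P j) ^ (1 / P j)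

/-- The Radon–Morrey norm `‖g‖_{M_μ^{q,q₀}}`. -/
def radonMorreyNorm (μ : Measure (Fin n → ℝ)) (q q0 : ℝ)
    (g : (Fin n → ℝ) → ℝ≥0∞) : ℝ≥0∞ :=
  ⨆ (a : Fin n → ℝ) (r : ℝ) (_ : 0 < r),
    volume (cube a r) ^ (1 / q0 - 1 / q) * (∫⁻ x in cube a r, g x ^ q ∂μ) ^ (1 / q)

/-- The growth norm `‖μ‖_β := sup_Q μ(Q)/ℓ_Q^β`. -/
def measureGrowthNorm (μ : Measure (Fin n → ℝ)) (β : ℝ) : ℝ≥0∞ :=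
  ⨆ (a : Fin n → ℝ) (r : ℝ) (_ : 0 < r), μ (cube a r) / ENNReal.ofReal r ^ β

/-- The `m`-sublinear fractional maximal operator `𝔐_α`. -/
def fracMaximal {m : ℕ} (α : ℝ) (f : Fin m → (Fin n → ℝ) → ℝ)
    (x : Fin n → ℝ) : ℝ≥0∞ :=
  ⨆ (a : Fin n → ℝ) (r : ℝ) (_ : 0 < r) (_ : x ∈ cube a r),
    ENNReal.ofReal r ^ (α - (m : ℝ) * n) *
      ∏ j, ∫⁻ y in cube a r, ENNReal.ofReal |f j y|

/-- The dyadic `m`-sublinear fractional maximal operator `𝔐_α^𝒟`. -/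
def dyadicFracMaximal {m : ℕ} (α : ℝ) (f : Fin m → (Fin n → ℝ) → ℝ)
    (x : Fin n → ℝ) : ℝ≥0∞ :=
  ⨆ (k : ℤ) (mv : Fin n → ℤ) (_ : x ∈ dyadicCube k mv),
    ENNReal.ofReal ((2 : ℝ) ^ (-k)) ^ (α - (m : ℝ) * n) *
      ∏ j, ∫⁻ y in dyadicCube k mv, ENNReal.ofReal |f j y|

/-- The dyadic `m`-linear fractional integral operator `ℑ_α^𝒟`. -/
def dyadicFracIntegral {m : ℕ} (α : ℝ) (f : Fin m → (Fin n → ℝ) → ℝ)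
    (x : Fin n → ℝ) : ℝ≥0∞ :=
  ∑' qk : ℤ × (Fin n → ℤ),
    (dyadicCube qk.1 qk.2).indicator
      (fun _ => ENNReal.ofReal ((2 : ℝ) ^ (-qk.1)) ^ (α - (m : ℝ) * n) *
        ∏ j, ∫⁻ y in dyadicCube qk.1 qk.2, ENNReal.ofReal |f j y|) x

/-- The `m`-linear fractional integral operator `ℑ_α` (with Euclidean distances). -/
def fracIntegral {m : ℕ} (α : ℝ) (f : Fin m → (Fin n → ℝ) → ℝ)
    (x : Fin n → ℝ) : ℝ≥0∞ :=
  ∫⁻ y : Fin m → Fin n → ℝ,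
    (∏ j, ENNReal.ofReal |f j (y j)|) /
      ENNReal.ofReal ((∑ j, Real.sqrt (∑ i, (x i - y j i) ^ 2)) ^ ((m : ℝ) * n - α))


namespace SpAux

abbrev Idx (n : ℕ) := ℤ × (Fin n → ℤ)

def idxCube (q : Idx n) : Set (Fin n → ℝ) := dyadicCube q.1 q.2

lemma cube_eq_pi (a : Fin n → ℝ) (r : ℝ) :
    cube a r = Set.pi Set.univ fun i => Set.Ico (a i) (a i + r) := by
  ext y; simp [cube, Set.mem_pi, Set.mem_Ico]

lemma measurableSet_cube (a : Fin n → ℝ) (r : ℝ) : MeasurableSet (cube a r) := by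
  rw [cube_eq_pi]; exact MeasurableSet.univ_pi fun i => measurableSet_Ico

lemma measurableSet_idxCube (q : Idx n) : MeasurableSet (idxCube q) :=
  measurableSet_cube _ _

lemma volume_cube (a : Fin n → ℝ) (r : ℝ) :
    volume (cube a r) = (ENNReal.ofReal r) ^ n := by
  rw [cube_eq_pi, volume_pi_pi]
  simp [Real.volume_Ico]

lemma twopow_pos (k : ℤ) : (0:ℝ) < 2 ^ k := zpow_pos two_pos k

lemma twopow_lt {j k : ℤ} (h : j < k) : (2:ℝ) ^ j < 2 ^ k :=
  zpow_lt_zpow_right₀ one_lt_two h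

lemma twopow_le {j k : ℤ} (h : j ≤ k) : (2:ℝ) ^ j ≤ 2 ^ k :=
  zpow_le_zpow_right₀ one_le_two h

lemma volume_idxCube (q : Idx n) :
    volume (idxCube q) = (ENNReal.ofReal ((2:ℝ) ^ (-q.1))) ^ n := volume_cube _ _

lemma volume_idxCube_pos (hn : 0 < n) (q : Idx n) : 0 < volume (idxCube q) := by
  rw [volume_idxCube]
  have : (0:ℝ≥0∞) < ENNReal.ofReal ((2:ℝ) ^ (-q.1)) := by
    rw [ENNReal.ofReal_pos]; exact twopow_pos _
  positivity

lemma volume_idxCube_ne_top (q : Idx n) : volume (idxCube q) ≠ ⊤ := by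
  rw [volume_idxCube]
  exact ENNReal.pow_ne_top ENNReal.ofReal_ne_top

lemma mem_dyadic_iff {k : ℤ} {mv : Fin n → ℤ} {x : Fin n → ℝ} :
    x ∈ dyadicCube k mv ↔ ∀ i, (mv i : ℝ) ≤ 2 ^ k * x i ∧ 2 ^ k * x i < mv i + 1 := by
  have h2k : (0:ℝ) < 2 ^ k := twopow_pos k
  have e1 : ∀ c t : ℝ, c * (2:ℝ) ^ (-k) ≤ t ↔ c ≤ 2 ^ k * t := by
    intro c t
    rw [zpow_neg, ← div_eq_mul_inv, div_le_iff₀ h2k, mul_comm]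
  have e2 : ∀ c t : ℝ, t < c * (2:ℝ) ^ (-k) ↔ 2 ^ k * t < c := by
    intro c t
    rw [zpow_neg, ← div_eq_mul_inv, lt_div_iff₀ h2k, mul_comm]
  constructor
  · intro h i
    obtain ⟨h1, h2⟩ := h i
    refine ⟨(e1 _ _).mp h1, (e2 _ _).mp ?_⟩
    have : (mv i : ℝ) * 2 ^ (-k) + 2 ^ (-k) = ((mv i : ℝ) + 1) * 2 ^ (-k) := by ring
    rw [← this]; exact h2
  · intro h i
    obtain ⟨h1, h2⟩ := h i
    refine ⟨(e1 _ _).mpr h1, ?_⟩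
    have : (mv i : ℝ) * 2 ^ (-k) + 2 ^ (-k) = ((mv i : ℝ) + 1) * 2 ^ (-k) := by ring
    rw [this]
    exact (e2 _ _).mpr h2

def flr (k : ℤ) (x : Fin n → ℝ) : Fin n → ℤ := fun i => ⌊(2:ℝ) ^ k * x i⌋

lemma mem_flr (k : ℤ) (x : Fin n → ℝ) : x ∈ dyadicCube k (flr k x) := by
  rw [mem_dyadic_iff]
  exact fun i => ⟨Int.floor_le _, Int.lt_floor_add_one _⟩

lemma eq_flr_of_mem {k : ℤ} {mv : Fin n → ℤ} {x : Fin n → ℝ} (h : x ∈ dyadicCube k mv) :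
    mv = flr k x := by
  rw [mem_dyadic_iff] at h
  funext i
  exact (Int.floor_eq_iff.mpr ⟨(h i).1, (h i).2⟩).symm

lemma floor_div_pow {s : ℝ} {a : ℤ} (h1 : (a:ℝ) ≤ s) (h2 : s < a + 1) (d : ℕ) :
    ⌊s / 2 ^ d⌋ = ⌊(a:ℝ) / 2 ^ d⌋ := by
  set q : ℤ := ⌊(a:ℝ) / 2 ^ d⌋ with hq
  have hd : (0:ℝ) < 2 ^ d := by positivity
  have hq1 : (q:ℝ) ≤ (a:ℝ) / 2 ^ d := Int.floor_le _
  have hq2 : ((a:ℝ) / 2 ^ d) < q + 1 := Int.lt_floor_add_one _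
  have hql : (q:ℝ) * 2 ^ d ≤ a := by
    rw [← le_div_iff₀ hd]; exact hq1
  have hqu : (a:ℝ) < (q+1) * 2 ^ d := by
    rw [← div_lt_iff₀ hd]; exact hq2
  have hint : a + 1 ≤ (q+1) * 2 ^ d := by
    have h' : (a:ℝ) < (((q+1) * 2 ^ d : ℤ) : ℝ) := by push_cast; linarith
    exact Int.lt_iff_add_one_le.mp (by exact_mod_cast h')
  have hqu' : (a:ℝ) + 1 ≤ (q+1) * 2 ^ d := by
    have h'' : ((a + 1 : ℤ) : ℝ) ≤ (((q+1) * 2 ^ d : ℤ) : ℝ) := by exact_mod_cast hint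
    push_cast at h''
    linarith
  rw [Int.floor_eq_iff]
  constructor
  · rw [le_div_iff₀ hd]; linarith
  · rw [div_lt_iff₀ hd]; linarith

lemma flr_eq_flr {j k : ℤ} (hjk : j ≤ k) {x y : Fin n → ℝ}
    (hy : y ∈ dyadicCube k (flr k x)) : flr j y = flr j x := by
  have hx := mem_flr k x
  rw [mem_dyadic_iff] at hy hx
  funext i
  set d : ℕ := (k - j).toNat with hd
  have hkd : k = j + d := by
    rw [hd, Int.toNat_of_nonneg (by omega)]; ring
  have key : ∀ z : Fin n → ℝ,
      (((flr k x : Fin n → ℤ) i : ℝ) ≤ 2 ^ k * z i ∧ 2 ^ k * z i < (flr k x i) + 1) →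
      ⌊(2:ℝ) ^ j * z i⌋ = ⌊((flr k x i : ℝ)) / 2 ^ d⌋ := by
    intro z hz
    have e : (2:ℝ) ^ j * z i = (2 ^ k * z i) / 2 ^ d := by
      rw [hkd, zpow_add₀ (two_ne_zero), zpow_natCast]
      field_simp
    rw [e]
    exact floor_div_pow hz.1 hz.2 d
  rw [show flr j y i = ⌊(2:ℝ) ^ j * y i⌋ from rfl, show flr j x i = ⌊(2:ℝ) ^ j * x i⌋ from rfl,
    key y (hy i), key x (hx i)]

lemma chain_mono {j k : ℤ} (hjk : j ≤ k) (x : Fin n → ℝ) :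
    dyadicCube k (flr k x) ⊆ dyadicCube j (flr j x) := by
  intro y hy
  rw [← flr_eq_flr hjk hy]
  exact mem_flr j y

lemma cube_eq_chain {k : ℤ} {mv : Fin n → ℤ} {x : Fin n → ℝ} (h : x ∈ dyadicCube k mv) :
    dyadicCube k mv = dyadicCube k (flr k x) := by rw [eq_flr_of_mem h]

lemma nested_or_disjoint (q q' : Idx n) :
    idxCube q ⊆ idxCube q' ∨ idxCube q' ⊆ idxCube q ∨ Disjoint (idxCube q) (idxCube q') := by
  by_cases hd : Disjoint (idxCube q) (idxCube q')
  · exact Or.inr (Or.inr hd)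
  rw [Set.not_disjoint_iff] at hd
  obtain ⟨x, hx, hx'⟩ := hd
  rcases le_total q.1 q'.1 with h | h
  · refine Or.inr (Or.inl ?_)
    calc idxCube q' = dyadicCube q'.1 (flr q'.1 x) := cube_eq_chain hx'
      _ ⊆ dyadicCube q.1 (flr q.1 x) := chain_mono h x
      _ = idxCube q := (cube_eq_chain hx).symm
  · refine Or.inl ?_
    calc idxCube q = dyadicCube q.1 (flr q.1 x) := cube_eq_chain hx
      _ ⊆ dyadicCube q'.1 (flr q'.1 x) := chain_mono h x
      _ = idxCube q' := (cube_eq_chain hx').symm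

def corner (q : Idx n) : Fin n → ℝ := fun i => (q.2 i : ℝ) * 2 ^ (-q.1)

lemma corner_mem (q : Idx n) : corner q ∈ idxCube q := by
  rw [idxCube, mem_dyadic_iff]
  intro i
  have e : (2:ℝ) ^ q.1 * corner q i = q.2 i := by
    show (2:ℝ) ^ q.1 * ((q.2 i : ℝ) * 2 ^ (-q.1)) = (q.2 i : ℝ)
    rw [mul_comm ((q.2 i : ℝ)), ← mul_assoc, ← zpow_add₀ (two_ne_zero), add_neg_cancel,
      zpow_zero, one_mul]
  rw [e]
  exact ⟨le_refl _, lt_add_one _⟩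

lemma mem_cube_spec {a : Fin n → ℝ} {r : ℝ} {x : Fin n → ℝ} (h : x ∈ cube a r) (i : Fin n) :
    a i ≤ x i ∧ x i < a i + r := h i

lemma gen_le_of_subset (hn : 0 < n) {q q' : Idx n} (h : idxCube q ⊆ idxCube q') :
    q'.1 ≤ q.1 := by
  by_contra hlt
  push_neg at hlt
  set i0 : Fin n := ⟨0, hn⟩
  set x0 := corner q with hx0def
  have hx0 : x0 ∈ idxCube q := corner_mem q
  set y : Fin n → ℝ := Function.update x0 i0 (x0 i0 + 2 ^ (-q'.1)) with hydef
  have hy : y ∈ idxCube q := by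
    intro i
    by_cases hi : i = i0
    · rw [hi]
      have h1 := mem_cube_spec hx0 i0
      have hyi : y i0 = x0 i0 + 2 ^ (-q'.1) := Function.update_self _ _ _
      rw [hyi]
      have hb : (fun i => ((q.2 : Fin n → ℤ) i : ℝ) * 2 ^ (-q.1)) i0
          = (q.2 i0 : ℝ) * 2 ^ (-q.1) := rfl
      constructor
      · have := twopow_pos (-q'.1); linarith [h1.1, hb]
      · have hlt2 : (2:ℝ) ^ (-q'.1) < 2 ^ (-q.1) := twopow_lt (by omega)
        have hcorner : x0 i0 = (q.2 i0 : ℝ) * 2 ^ (-q.1) := rfl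
        linarith [hb, hcorner]
    · have h1 := mem_cube_spec hx0 i
      have hyi : y i = x0 i := by rw [hydef]; exact Function.update_of_ne hi _ _
      rw [hyi]; exact h1
  have hx0' := mem_cube_spec (h hx0) i0
  have hy' := mem_cube_spec (h hy) i0
  have hyi : y i0 = x0 i0 + 2 ^ (-q'.1) := Function.update_self _ _ _
  rw [hyi] at hy'
  linarith [hx0'.1, hy'.2]

lemma idxCube_inj (hn : 0 < n) {q q' : Idx n} (h : idxCube q = idxCube q') : q = q' := by
  have h1 : q'.1 ≤ q.1 := gen_le_of_subset hn h.le
  have h2 : q.1 ≤ q'.1 := gen_le_of_subset hn h.ge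
  have hk : q.1 = q'.1 := le_antisymm h2 h1
  have hc : corner q ∈ idxCube q' := h ▸ corner_mem q
  have := eq_flr_of_mem (hc : corner q ∈ dyadicCube q'.1 q'.2)
  have h2' := eq_flr_of_mem ((corner_mem q) : corner q ∈ dyadicCube q.1 q.2)
  rw [hk] at h2'
  obtain ⟨k, mv⟩ := q; obtain ⟨k', mv'⟩ := q'
  simp only at hk this h2'
  subst hk
  exact Prod.ext rfl ((this.trans h2'.symm).symm)

lemma gen_lt_of_ssubset (hn : 0 < n) {q q' : Idx n} (h : idxCube q ⊂ idxCube q') :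
    q'.1 < q.1 := by
  have hle := gen_le_of_subset hn h.subset
  rcases lt_or_eq_of_le hle with h' | h'
  · exact h'
  · exfalso
    obtain ⟨x, hx⟩ : ∃ x, x ∈ idxCube q := ⟨corner q, corner_mem q⟩
    have hx' := h.subset hx
    have e1 : idxCube q = dyadicCube q.1 (flr q.1 x) := cube_eq_chain hx
    have e2 : idxCube q' = dyadicCube q'.1 (flr q'.1 x) := cube_eq_chain hx'
    have : idxCube q' ⊆ idxCube q := by
      rw [e1, e2]
      exact h' ▸ chain_mono (le_of_eq h'.symm) x
    exact h.not_subset this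


/-! ## Maximal-cube covering lemma -/

lemma exists_maximal_in (hn : 0 < n) {S : Idx n} {H : Set (Idx n)}
    (hH : ∀ q ∈ H, idxCube q ⊆ idxCube S) (hS : S ∉ H) :
    ∀ q ∈ H, ∃ p, (p ∈ H ∧ ∀ q' ∈ H, idxCube p ⊆ idxCube q' → q' = p) ∧
      idxCube q ⊆ idxCube p := by
  have hgen : ∀ q ∈ H, S.1 ≤ q.1 := fun q hq => gen_le_of_subset hn (hH q hq)
  have key : ∀ N : ℕ, ∀ q ∈ H, (q.1 - S.1).toNat ≤ N →
      ∃ p, (p ∈ H ∧ ∀ q' ∈ H, idxCube p ⊆ idxCube q' → q' = p) ∧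
        idxCube q ⊆ idxCube p := by
    intro N
    induction N with
    | zero =>
      intro q hq hN
      exfalso
      have h1 : S.1 ≤ q.1 := hgen q hq
      have h2 : q.1 = S.1 := by omega
      -- q ⊆ S with same generation means q = S
      have hsub := hH q hq
      have hc : corner q ∈ idxCube S := hsub (corner_mem q)
      have e1 : idxCube q = dyadicCube q.1 (flr q.1 (corner q)) := cube_eq_chain (corner_mem q)
      have e2 : idxCube S = dyadicCube S.1 (flr S.1 (corner q)) := cube_eq_chain hc
      have : idxCube q = idxCube S := by rw [e1, e2, h2]
      exact hS (idxCube_inj hn this ▸ hq)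
    | succ N ih =>
      intro q hq hN
      by_cases hmax : ∀ q' ∈ H, idxCube q ⊆ idxCube q' → q' = q
      · exact ⟨q, ⟨hq, hmax⟩, subset_rfl⟩
      · push_neg at hmax
        obtain ⟨q', hq', hsub, hne⟩ := hmax
        have hproper : idxCube q ⊂ idxCube q' := by
          refine ⟨hsub, fun hle => ?_⟩
          exact hne ((idxCube_inj hn (Set.Subset.antisymm hsub hle)).symm)
        have hgenlt : q'.1 < q.1 := gen_lt_of_ssubset hn hproper
        have hgenS : S.1 ≤ q'.1 := hgen q' hq'
        obtain ⟨p, hp, hsub'⟩ := ih q' hq' (by omega)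
        exact ⟨p, hp, hsub.trans hsub'⟩
  intro q hq
  exact key (q.1 - S.1).toNat q hq le_rfl

lemma heavy_cover (hn : 0 < n) (S : Idx n) (g : (Fin n → ℝ) → ℝ≥0∞) (c : ℝ≥0∞)
    (hc1 : 1 ≤ c) (hctop : c ≠ ⊤)
    (hS0 : (∫⁻ y in idxCube S, g y) ≠ 0) (hSfin : (∫⁻ y in idxCube S, g y) ≠ ⊤) :
    volume (⋃ q ∈ {q : Idx n | idxCube q ⊆ idxCube S ∧
        c * (volume (idxCube q) * ∫⁻ y in idxCube S, g y) <
          volume (idxCube S) * ∫⁻ y in idxCube q, g y}, idxCube q)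
      ≤ c⁻¹ * volume (idxCube S) := by
  set IS := ∫⁻ y in idxCube S, g y with hIS
  set H : Set (Idx n) := {q : Idx n | idxCube q ⊆ idxCube S ∧
      c * (volume (idxCube q) * IS) < volume (idxCube S) * ∫⁻ y in idxCube q, g y} with hH
  have hSnot : S ∉ H := by
    intro hmem
    have h2 := hmem.2
    have : volume (idxCube S) * IS ≤ c * (volume (idxCube S) * IS) :=
      le_mul_of_one_le_left zero_le hc1
    exact absurd h2 (not_lt.mpr this)
  set M : Set (Idx n) := {p ∈ H | ∀ q' ∈ H, idxCube p ⊆ idxCube q' → q' = p} with hM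
  have hMH : M ⊆ H := fun p hp => hp.1
  have hcov : (⋃ q ∈ H, idxCube q) ⊆ ⋃ p ∈ M, idxCube p := by
    intro x hx
    rw [Set.mem_iUnion₂] at hx ⊢
    obtain ⟨q, hq, hxq⟩ := hx
    obtain ⟨p, hp, hsub⟩ := exists_maximal_in hn (fun q hq => hq.1) hSnot q hq
    exact ⟨p, hp, hsub hxq⟩
  have hdisj : ∀ p ∈ M, ∀ p' ∈ M, p ≠ p' → Disjoint (idxCube p) (idxCube p') := by
    intro p hp p' hp' hne
    rcases nested_or_disjoint p p' with h | h | h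
    · exact absurd (hp.2 p' hp'.1 h) (Ne.symm hne)
    · exact absurd (hp'.2 p hp.1 h) hne
    · exact h
  have hMcnt : M.Countable := Set.to_countable M
  haveI : Countable ↥M := hMcnt.to_subtype
  have hvol : volume (⋃ q ∈ H, idxCube q) ≤ ∑' p : M, volume (idxCube p.1) := by
    refine le_trans (measure_mono hcov) ?_
    exact measure_biUnion_le volume hMcnt _
  have hsum_int : ∑' p : M, (∫⁻ y in idxCube p.1, g y) ≤ IS := by
    have hdisj' : Pairwise (Function.onFun Disjoint fun p : M => idxCube p.1) := by
      intro p p' hne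
      exact hdisj p.1 p.2 p'.1 p'.2 (fun h => hne (Subtype.ext h))
    rw [← lintegral_iUnion (fun p : M => measurableSet_idxCube p.1) hdisj' g]
    exact lintegral_mono_set (Set.iUnion_subset fun p => (hMH p.2).1)
  have hterm : ∀ p : M, volume (idxCube p.1) ≤
      (c * IS)⁻¹ * (volume (idxCube S) * ∫⁻ y in idxCube p.1, g y) := by
    intro p
    have h2 := (hMH p.2).2
    have hne0 : c * IS ≠ 0 := by
      simp only [ne_eq, mul_eq_zero, not_or]
      exact ⟨by rintro rfl; simp at hc1, hS0⟩
    have hnetop : c * IS ≠ ⊤ := ENNReal.mul_ne_top hctop hSfin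
    calc volume (idxCube p.1)
        = (c * IS)⁻¹ * (c * IS * volume (idxCube p.1)) := by
          rw [← mul_assoc, ENNReal.inv_mul_cancel hne0 hnetop, one_mul]
      _ ≤ (c * IS)⁻¹ * (volume (idxCube S) * ∫⁻ y in idxCube p.1, g y) := by
          refine mul_le_mul_right ?_ _
          calc c * IS * volume (idxCube p.1) = c * (volume (idxCube p.1) * IS) := by ring
            _ ≤ volume (idxCube S) * ∫⁻ y in idxCube p.1, g y := h2.le
  calc volume (⋃ q ∈ H, idxCube q) ≤ ∑' p : M, volume (idxCube p.1) := hvol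
    _ ≤ ∑' p : M, (c * IS)⁻¹ * (volume (idxCube S) * ∫⁻ y in idxCube p.1, g y) :=
        ENNReal.tsum_le_tsum hterm
    _ = (c * IS)⁻¹ * (volume (idxCube S) * ∑' p : M, (∫⁻ y in idxCube p.1, g y)) := by
        rw [ENNReal.tsum_mul_left, ENNReal.tsum_mul_left]
    _ ≤ (c * IS)⁻¹ * (volume (idxCube S) * IS) := by gcongr
    _ = c⁻¹ * volume (idxCube S) * (IS⁻¹ * IS) := by
        rw [ENNReal.mul_inv (Or.inr hSfin) (Or.inl hctop)]
        ring
    _ = c⁻¹ * volume (idxCube S) := by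
        rw [ENNReal.inv_mul_cancel hS0 hSfin, mul_one]


/-! ## f-dependent quantities -/

variable {m : ℕ}

def FF (f : Fin m → (Fin n → ℝ) → ℝ) (j : Fin m) (q : Idx n) : ℝ≥0∞ :=
  ∫⁻ y in idxCube q, ENNReal.ofReal |f j y|

def qw (f : Fin m → (Fin n → ℝ) → ℝ) (q : Idx n) : ℝ≥0∞ :=
  ∏ j, (volume (idxCube q))⁻¹ * FF f j q

lemma FF_ne_top {f : Fin m → (Fin n → ℝ) → ℝ} (hfi : ∀ j, LocallyIntegrable (f j) volume)
    (j : Fin m) (q : Idx n) : FF f j q ≠ ⊤ := by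
  set K : Set (Fin n → ℝ) :=
    Set.pi Set.univ fun i => Set.Icc (corner q i) (corner q i + 2 ^ (-q.1)) with hK
  have hKc : IsCompact K := isCompact_univ_pi fun i => isCompact_Icc
  have hsub : idxCube q ⊆ K := by
    intro y hy
    rw [hK, Set.mem_pi]
    intro i _
    obtain ⟨h1, h2⟩ := mem_cube_spec hy i
    exact ⟨h1, h2.le⟩
  have hint : IntegrableOn (f j) (idxCube q) volume :=
    ((hfi j).integrableOn_isCompact hKc).mono_set hsub
  have habs : IntegrableOn (fun y => |f j y|) (idxCube q) volume := hint.abs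
  have := habs.2
  rw [HasFiniteIntegral] at this
  have heq : (∫⁻ y in idxCube q, ENNReal.ofReal |f j y|) = ∫⁻ y in idxCube q, ‖|f j y|‖₊ := by
    refine lintegral_congr fun y => ?_
    rw [← enorm_eq_nnnorm, Real.enorm_eq_ofReal_abs, abs_abs]
  rw [FF, heq]
  exact this.ne

lemma FF_mono {f : Fin m → (Fin n → ℝ) → ℝ} (j : Fin m) {q q' : Idx n}
    (h : idxCube q ⊆ idxCube q') : FF f j q ≤ FF f j q' := lintegral_mono_set h

lemma vol_inv_ne_top (hn : 0 < n) (q : Idx n) : (volume (idxCube q))⁻¹ ≠ ⊤ :=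
  ENNReal.inv_ne_top.mpr (volume_idxCube_pos hn q).ne'

lemma vol_inv_ne_zero (q : Idx n) : (volume (idxCube q))⁻¹ ≠ 0 :=
  ENNReal.inv_ne_zero.mpr (volume_idxCube_ne_top q)

lemma qw_ne_top (hn : 0 < n) {f : Fin m → (Fin n → ℝ) → ℝ}
    (hfi : ∀ j, LocallyIntegrable (f j) volume) (q : Idx n) : qw f q ≠ ⊤ := by
  rw [qw]
  exact (ENNReal.prod_lt_top fun j _ =>
    (ENNReal.mul_lt_top (vol_inv_ne_top hn q).lt_top (FF_ne_top hfi j q).lt_top)).ne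

lemma FF_ne_zero_of_qw {f : Fin m → (Fin n → ℝ) → ℝ} {q : Idx n} (h : qw f q ≠ 0)
    (j : Fin m) : FF f j q ≠ 0 := by
  rw [qw, Finset.prod_ne_zero_iff] at h
  intro h0
  exact h j (Finset.mem_univ j) (by rw [h0, mul_zero])

/-! ## The constant Λ and zpow helpers -/

def Lam (m n : ℕ) : ℝ≥0∞ := 2 ^ (m * n) * (2 * m) ^ m

lemma Lam_ne_zero : Lam m n ≠ 0 := by
  rcases Nat.eq_zero_or_pos m with h | h
  · subst h; simp [Lam]
  · rw [Lam]
    exact mul_ne_zero (pow_ne_zero _ (by norm_num))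
      (pow_ne_zero _ (mul_ne_zero (by norm_num) (Nat.cast_ne_zero.mpr h.ne')))

lemma Lam_ne_top (hm : 0 < m) : Lam m n ≠ ⊤ := by
  rw [Lam]
  refine ENNReal.mul_ne_top (ENNReal.pow_ne_top (by norm_num)) (ENNReal.pow_ne_top ?_)
  refine ENNReal.mul_ne_top (by norm_num) ?_
  simp [ENNReal.natCast_ne_top]

lemma one_lt_Lam (hm : 0 < m) (hn : 0 < n) : 1 < Lam m n := by
  rw [Lam]
  have h1 : (2:ℝ≥0∞) ≤ 2 ^ (m * n) := by
    calc (2:ℝ≥0∞) = 2 ^ 1 := (pow_one 2).symm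
    _ ≤ 2 ^ (m*n) := by
      apply pow_le_pow_right₀ (by norm_num)
      exact Nat.one_le_iff_ne_zero.mpr (Nat.mul_ne_zero hm.ne' hn.ne')
  have h2 : (1:ℝ≥0∞) ≤ (2 * m) ^ m := by
    apply one_le_pow_of_one_le'
    calc (1:ℝ≥0∞) ≤ 2 := by norm_num
    _ ≤ 2 * m := le_mul_of_one_le_right zero_le (by exact_mod_cast hm)
  calc (1:ℝ≥0∞) < 2 := by norm_num
  _ ≤ 2 ^ (m*n) * 1 := by rw [mul_one]; exact h1
  _ ≤ 2 ^ (m*n) * (2*m)^m := by gcongr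

lemma zpow_mono_int {x : ℝ≥0∞} (h1 : 1 ≤ x) (htop : x ≠ ⊤) {a b : ℤ} (hab : a ≤ b) :
    x ^ a ≤ x ^ b := by
  have hx0 : x ≠ 0 := fun h => by simp [h] at h1
  have hb : b = a + ((b - a).toNat : ℤ) := by
    rw [Int.toNat_of_nonneg (by omega)]; ring
  rw [hb, ENNReal.zpow_add hx0 htop, zpow_natCast]
  exact le_mul_of_one_le_right zero_le (one_le_pow_of_one_le' h1 _)

lemma zpow_lt_int {x : ℝ≥0∞} (h1 : 1 ≤ x) (htop : x ≠ ⊤) {a b : ℤ}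
    (h : x ^ a < x ^ b) : a < b := by
  by_contra hab
  push_neg at hab
  exact absurd h (not_lt.mpr (zpow_mono_int h1 htop hab))

lemma zpow_pos' {x : ℝ≥0∞} (hx0 : x ≠ 0) (htop : x ≠ ⊤) (a : ℤ) : 0 < x ^ a :=
  ENNReal.zpow_pos hx0 htop a

/-! ## Parent cube -/

def par (q : Idx n) : Idx n := (q.1 - 1, flr (q.1 - 1) (corner q))

lemma par_supset (q : Idx n) : idxCube q ⊆ idxCube (par q) := by
  have h := cube_eq_chain (corner_mem q)
  calc idxCube q = dyadicCube q.1 (flr q.1 (corner q)) := h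
    _ ⊆ dyadicCube (q.1 - 1) (flr (q.1 - 1) (corner q)) := chain_mono (by omega) (corner q)
    _ = idxCube (par q) := rfl

lemma par_proper (hn : 0 < n) (q : Idx n) : idxCube q ⊂ idxCube (par q) := by
  refine ⟨par_supset q, fun hle => ?_⟩
  have := idxCube_inj hn (Set.Subset.antisymm (par_supset q) hle)
  have : q.1 = q.1 - 1 := congrArg Prod.fst this
  omega

lemma vol_par (q : Idx n) :
    volume (idxCube (par q)) = 2 ^ n * volume (idxCube q) := by
  rw [volume_idxCube, volume_idxCube]
  have e : (2:ℝ) ^ (-(par q).1) = 2 * 2 ^ (-q.1) := by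
    show (2:ℝ) ^ (-(q.1 - 1)) = 2 * 2 ^ (-q.1)
    rw [show -(q.1 - 1) = 1 + -q.1 by ring, zpow_add₀ (two_ne_zero), zpow_one]
  rw [e, ENNReal.ofReal_mul (by norm_num), mul_pow]
  congr 1
  rw [ENNReal.ofReal_ofNat]

lemma qw_le_par (hn : 0 < n) {f : Fin m → (Fin n → ℝ) → ℝ} (q : Idx n) :
    qw f q ≤ 2 ^ (m * n) * qw f (par q) := by
  have key : ∀ j : Fin m, (volume (idxCube q))⁻¹ * FF f j q ≤
      2 ^ n * ((volume (idxCube (par q)))⁻¹ * FF f j (par q)) := by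
    intro j
    have hv : (volume (idxCube q))⁻¹ = 2 ^ n * (volume (idxCube (par q)))⁻¹ := by
      rw [vol_par, ENNReal.mul_inv (Or.inl (pow_ne_zero _ (by norm_num)))
        (Or.inl (ENNReal.pow_ne_top (by norm_num)))]
      rw [← mul_assoc, ENNReal.mul_inv_cancel (pow_ne_zero _ (by norm_num))
        (ENNReal.pow_ne_top (by norm_num)), one_mul]
    calc (volume (idxCube q))⁻¹ * FF f j q
        ≤ (volume (idxCube q))⁻¹ * FF f j (par q) := by
          gcongr
          exact FF_mono j (par_supset q)
      _ = 2 ^ n * ((volume (idxCube (par q)))⁻¹ * FF f j (par q)) := by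
          rw [hv]; ring
  calc qw f q ≤ ∏ j, 2 ^ n * ((volume (idxCube (par q)))⁻¹ * FF f j (par q)) :=
        Finset.prod_le_prod' fun j _ => key j
    _ = 2 ^ (m * n) * qw f (par q) := by
        rw [Finset.prod_mul_distrib, Finset.prod_const, Finset.card_univ, Fintype.card_fin,
          ← pow_mul, qw, mul_comm n m]

/-! ## Stopping cubes, signs, bad quadrants -/

def Stop (f : Fin m → (Fin n → ℝ) → ℝ) : Set (Idx n) :=
  {q | ∃ ν : ℤ, Lam m n ^ ν ≤ qw f q ∧ ∀ q', idxCube q ⊂ idxCube q' → qw f q' < Lam m n ^ ν}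

def sgn (x : Fin n → ℝ) : Fin n → ℤ := fun i => if 0 ≤ x i then 0 else -1

def sgnIdx (mv : Fin n → ℤ) : Fin n → ℤ := fun i => if 0 ≤ mv i then 0 else -1

lemma sgn_of_mem {q : Idx n} {y : Fin n → ℝ} (hy : y ∈ idxCube q) :
    sgn y = sgnIdx q.2 := by
  have h := mem_dyadic_iff.mp hy
  funext i
  obtain ⟨h1, h2⟩ := h i
  have hp : (0:ℝ) < 2 ^ q.1 := twopow_pos _
  rw [sgn, sgnIdx]
  by_cases hc : 0 ≤ q.2 i
  · have hcast : (0:ℝ) ≤ (q.2 i : ℝ) := by exact_mod_cast hc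
    have hy0 : 0 ≤ y i := by nlinarith
    simp [hc, hy0]
  · push_neg at hc
    have hc' : q.2 i + 1 ≤ 0 := by omega
    have hc'' : ((q.2 i : ℝ) + 1) ≤ 0 := by exact_mod_cast hc'
    have hy0 : y i < 0 := by nlinarith
    rw [if_neg (not_le.mpr hy0), if_neg (not_le.mpr hc)]

lemma sgnIdx_flr (j : ℤ) (x : Fin n → ℝ) : sgnIdx (flr j x) = sgn x := by
  funext i
  rw [sgnIdx, sgn, flr]
  have : (0 ≤ ⌊(2:ℝ) ^ j * x i⌋) ↔ (0 ≤ x i) := by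
    rw [Int.floor_nonneg]
    constructor
    · intro h; nlinarith [twopow_pos j]
    · intro h; positivity
  simp only [this]

lemma sgnIdx_sgn (x : Fin n → ℝ) : sgnIdx (sgn x) = sgn x := by
  funext i
  rw [sgnIdx, sgn]
  by_cases hc : 0 ≤ x i <;> simp [hc]

lemma flr_small {x : Fin n → ℝ} {j : ℤ} (h : ∀ i, |x i| < 2 ^ (-j)) : flr j x = sgn x := by
  funext i
  have habs := abs_lt.mp (h i)
  have hp : (0:ℝ) < 2 ^ j := twopow_pos _
  have he : (2:ℝ) ^ j * 2 ^ (-j) = 1 := by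
    rw [← zpow_add₀ (two_ne_zero), add_neg_cancel, zpow_zero]
  rw [flr, sgn]
  by_cases hc : 0 ≤ x i
  · have h1 : (0:ℝ) ≤ 2 ^ j * x i := by positivity
    have h2 : (2:ℝ) ^ j * x i < 1 := by
      calc (2:ℝ) ^ j * x i < 2 ^ j * 2 ^ (-j) := by gcongr; exact habs.2
        _ = 1 := he
    simp only [hc, if_true]
    exact Int.floor_eq_zero_iff.mpr ⟨h1, h2⟩
  · push_neg at hc
    have h1 : (2:ℝ) ^ j * x i < 0 := by
      have := mul_pos hp (neg_pos.mpr hc)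
      nlinarith
    have h2 : (-1:ℝ) ≤ 2 ^ j * x i := by
      calc (-1:ℝ) = -(2 ^ j * 2 ^ (-j)) := by rw [he]
        _ ≤ 2 ^ j * x i := by nlinarith [habs.1]
    simp only [hc, if_false, not_le.mpr hc]
    rw [Int.floor_eq_iff]
    constructor
    · exact_mod_cast h2
    · push_cast; linarith

lemma exists_small_gen (x : Fin n → ℝ) :
    ∃ j0 : ℤ, j0 ≤ 0 ∧ ∀ j ≤ j0, ∀ i, |x i| < 2 ^ (-j) := by
  obtain ⟨N, hN⟩ := exists_nat_gt (∑ i, |x i|)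
  refine ⟨-(N:ℤ), by omega, fun j hj i => ?_⟩
  have h1 : |x i| ≤ ∑ i', |x i'| :=
    Finset.single_le_sum (f := fun i' => |x i'|) (fun _ _ => abs_nonneg _) (Finset.mem_univ i)
  have h2 : (N:ℝ) ≤ 2 ^ (N:ℤ) := by
    have hh : N ≤ 2 ^ N := (Nat.lt_two_pow_self).le
    have hh' : (N:ℝ) ≤ (2:ℝ) ^ (N:ℕ) := by exact_mod_cast hh
    rwa [← zpow_natCast (2:ℝ) N] at hh'
  have h3 : (2:ℝ) ^ (N:ℤ) ≤ 2 ^ (-j) := twopow_le (by omega)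
  linarith

def Bad (f : Fin m → (Fin n → ℝ) → ℝ) (σ : Fin n → ℤ) : Prop :=
  ∃ ν : ℤ, ∀ k0 : ℤ, ∃ j ≤ k0, Lam m n ^ ν ≤ qw f ((j, σ) : Idx n)

def Sel (f : Fin m → (Fin n → ℝ) → ℝ) : Set (Idx n) :=
  {q | (sgnIdx q.2 = q.2 ∧ Bad f q.2) ∨ (q ∈ Stop f ∧ ¬ Bad f (sgnIdx q.2))}

/-! ## The jump lemma -/

lemma stop_jump (hn : 0 < n) (hm : 0 < m) {f : Fin m → (Fin n → ℝ) → ℝ}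
    {S T : Idx n} (hS : S ∈ Stop f) (hT : T ∈ Stop f)
    (hsub : idxCube T ⊂ idxCube S) : ((2 * m : ℝ≥0∞)) ^ m * qw f S < qw f T := by
  obtain ⟨ν, hSν, hSanc⟩ := hS
  obtain ⟨μ, hTμ, hTanc⟩ := hT
  have hw : qw f S < Lam m n ^ μ := hTanc S hsub
  have hνμ : ν < μ := zpow_lt_int (one_lt_Lam hm hn).le (Lam_ne_top hm)
    (lt_of_le_of_lt hSν hw)
  have hpar : qw f (par S) < Lam m n ^ ν := hSanc (par S) (par_proper hn S)
  have hSub : qw f S ≤ 2 ^ (m * n) * qw f (par S) := qw_le_par hn S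
  have step1 : (2 * (m:ℝ≥0∞)) ^ m * qw f S ≤ Lam m n * qw f (par S) := by
    calc (2 * (m:ℝ≥0∞)) ^ m * qw f S ≤ (2 * (m:ℝ≥0∞)) ^ m * (2 ^ (m*n) * qw f (par S)) := by
          gcongr
      _ = Lam m n * qw f (par S) := by rw [Lam]; ring
  have step2 : Lam m n * qw f (par S) < Lam m n * Lam m n ^ ν := by
    rw [ENNReal.mul_lt_mul_iff_right Lam_ne_zero (Lam_ne_top hm)]
    exact hpar
  have step3 : Lam m n * Lam m n ^ ν ≤ Lam m n ^ μ := by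
    have : Lam m n * Lam m n ^ ν = Lam m n ^ (ν + 1) := by
      rw [ENNReal.zpow_add Lam_ne_zero (Lam_ne_top hm), zpow_one, mul_comm]
    rw [this]
    exact zpow_mono_int (one_lt_Lam hm hn).le (Lam_ne_top hm) (by omega)
  calc (2 * (m:ℝ≥0∞)) ^ m * qw f S ≤ Lam m n * qw f (par S) := step1
    _ < Lam m n * Lam m n ^ ν := step2
    _ ≤ Lam m n ^ μ := step3
    _ ≤ qw f T := hTμ

lemma exists_heavy_coord (hn : 0 < n) {f : Fin m → (Fin n → ℝ) → ℝ}
    (hfi : ∀ j, LocallyIntegrable (f j) volume) {S T : Idx n}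
    (hjump : ((2 * m : ℝ≥0∞)) ^ m * qw f S < qw f T) :
    ∃ j, (2 * m : ℝ≥0∞) * (volume (idxCube T) * FF f j S) <
      volume (idxCube S) * FF f j T := by
  by_contra hcon
  push_neg at hcon
  have key : ∀ j : Fin m, (volume (idxCube T))⁻¹ * FF f j T ≤
      (2 * m : ℝ≥0∞) * ((volume (idxCube S))⁻¹ * FF f j S) := by
    intro j
    have h := hcon j
    have hvT0 : volume (idxCube T) ≠ 0 := (volume_idxCube_pos hn T).ne'
    have hvTt : volume (idxCube T) ≠ ⊤ := volume_idxCube_ne_top T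
    have hvS0 : volume (idxCube S) ≠ 0 := (volume_idxCube_pos hn S).ne'
    have hvSt : volume (idxCube S) ≠ ⊤ := volume_idxCube_ne_top S
    calc (volume (idxCube T))⁻¹ * FF f j T
        = (volume (idxCube T))⁻¹ * (volume (idxCube S))⁻¹ *
            (volume (idxCube S) * FF f j T) := by
          rw [← mul_assoc, mul_assoc ((volume (idxCube T))⁻¹), ENNReal.inv_mul_cancel hvS0 hvSt,
            mul_one]
      _ ≤ (volume (idxCube T))⁻¹ * (volume (idxCube S))⁻¹ *
            (2 * m * (volume (idxCube T) * FF f j S)) := by gcongr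
      _ = (2 * m : ℝ≥0∞) * ((volume (idxCube S))⁻¹ * FF f j S) *
            ((volume (idxCube T))⁻¹ * volume (idxCube T)) := by ring
      _ = (2 * m : ℝ≥0∞) * ((volume (idxCube S))⁻¹ * FF f j S) := by
          rw [ENNReal.inv_mul_cancel hvT0 hvTt, mul_one]
  have : qw f T ≤ ((2 * m : ℝ≥0∞)) ^ m * qw f S := by
    calc qw f T ≤ ∏ j, (2 * m : ℝ≥0∞) * ((volume (idxCube S))⁻¹ * FF f j S) :=
          Finset.prod_le_prod' fun j _ => key j
      _ = ((2 * m : ℝ≥0∞)) ^ m * qw f S := by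
          rw [Finset.prod_mul_distrib, Finset.prod_const, Finset.card_univ, Fintype.card_fin, qw]
  exact absurd hjump (not_lt.mpr this)


/-! ## Heavy sets -/

def Heavy (f : Fin m → (Fin n → ℝ) → ℝ) (S : Idx n) : Set (Fin n → ℝ) :=
  ⋃ j : Fin m, ⋃ q ∈ {q : Idx n | idxCube q ⊆ idxCube S ∧
    (2 * m : ℝ≥0∞) * (volume (idxCube q) * ∫⁻ y in idxCube S, ENNReal.ofReal |f j y|) <
      volume (idxCube S) * ∫⁻ y in idxCube q, ENNReal.ofReal |f j y|}, idxCube q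

lemma measurableSet_heavy (f : Fin m → (Fin n → ℝ) → ℝ) (S : Idx n) :
    MeasurableSet (Heavy f S) :=
  MeasurableSet.iUnion fun _ => MeasurableSet.biUnion (Set.to_countable _)
    fun q _ => measurableSet_idxCube q

lemma qw_pos_of_stop {f : Fin m → (Fin n → ℝ) → ℝ} {S : Idx n} (hm : 0 < m)
    (hS : S ∈ Stop f) : qw f S ≠ 0 := by
  obtain ⟨ν, hν, _⟩ := hS
  intro h0
  rw [h0] at hν
  exact absurd hν (by simp [(zpow_pos' (Lam_ne_zero) (Lam_ne_top hm) ν).ne'])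

lemma heavy_vol (hn : 0 < n) (hm : 0 < m) {f : Fin m → (Fin n → ℝ) → ℝ}
    (hfi : ∀ j, LocallyIntegrable (f j) volume) {S : Idx n} (hS : S ∈ Stop f) :
    volume (Heavy f S) ≤ 2⁻¹ * volume (idxCube S) := by
  have hqw0 : qw f S ≠ 0 := qw_pos_of_stop hm hS
  have hc1 : (1:ℝ≥0∞) ≤ 2 * m := by
    calc (1:ℝ≥0∞) ≤ 2 := by norm_num
    _ ≤ 2 * m := le_mul_of_one_le_right zero_le (by exact_mod_cast hm)
  have hctop : (2 * m : ℝ≥0∞) ≠ ⊤ := ENNReal.mul_ne_top (by norm_num) (ENNReal.natCast_ne_top m)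
  have step : ∀ j : Fin m, volume (⋃ q ∈ {q : Idx n | idxCube q ⊆ idxCube S ∧
      (2 * m : ℝ≥0∞) * (volume (idxCube q) * ∫⁻ y in idxCube S, ENNReal.ofReal |f j y|) <
        volume (idxCube S) * ∫⁻ y in idxCube q, ENNReal.ofReal |f j y|}, idxCube q)
      ≤ (2 * m : ℝ≥0∞)⁻¹ * volume (idxCube S) := by
    intro j
    exact heavy_cover hn S (fun y => ENNReal.ofReal |f j y|) (2 * m) hc1 hctop
      (FF_ne_zero_of_qw hqw0 j) (FF_ne_top hfi j S)
  calc volume (Heavy f S) ≤ ∑' j : Fin m, volume (⋃ q ∈ {q : Idx n | idxCube q ⊆ idxCube S ∧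
      (2 * m : ℝ≥0∞) * (volume (idxCube q) * ∫⁻ y in idxCube S, ENNReal.ofReal |f j y|) <
        volume (idxCube S) * ∫⁻ y in idxCube q, ENNReal.ofReal |f j y|}, idxCube q) :=
        measure_iUnion_le _
    _ ≤ ∑' _ : Fin m, (2 * m : ℝ≥0∞)⁻¹ * volume (idxCube S) := ENNReal.tsum_le_tsum step
    _ = (m : ℝ≥0∞) * ((2 * m : ℝ≥0∞)⁻¹ * volume (idxCube S)) := by
        rw [tsum_fintype]
        rw [Finset.sum_const, Finset.card_univ, Fintype.card_fin, nsmul_eq_mul]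
    _ ≤ 2⁻¹ * volume (idxCube S) := by
        rw [ENNReal.mul_inv (Or.inl (by norm_num)) (Or.inl (by norm_num)), ← mul_assoc]
        have : (m : ℝ≥0∞) * (2⁻¹ * (m : ℝ≥0∞)⁻¹) = 2⁻¹ * ((m:ℝ≥0∞) * (m:ℝ≥0∞)⁻¹) := by ring
        rw [this, ENNReal.mul_inv_cancel (by exact_mod_cast hm.ne') (ENNReal.natCast_ne_top m),
          mul_one]

lemma stop_nested_subset_heavy (hn : 0 < n) (hm : 0 < m) {f : Fin m → (Fin n → ℝ) → ℝ}
    (hfi : ∀ j, LocallyIntegrable (f j) volume) {S T : Idx n}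
    (hS : S ∈ Stop f) (hT : T ∈ Stop f) (hsub : idxCube T ⊂ idxCube S) :
    idxCube T ⊆ Heavy f S := by
  obtain ⟨j, hj⟩ := exists_heavy_coord hn hfi (stop_jump hn hm hS hT hsub)
  intro y hy
  exact Set.mem_iUnion.mpr ⟨j, Set.mem_biUnion ⟨hsub.subset, hj⟩ hy⟩

/-! ## rpow bridges -/

lemma ell_ne_zero (k : ℤ) : ENNReal.ofReal ((2:ℝ) ^ (-k)) ≠ 0 := by
  rw [ne_eq, ENNReal.ofReal_eq_zero, not_le]
  exact twopow_pos _

lemma ell_ne_top (k : ℤ) : ENNReal.ofReal ((2:ℝ) ^ (-k)) ≠ ⊤ := ENNReal.ofReal_ne_top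

lemma term_eq (hn : 0 < n) (α : ℝ) (f : Fin m → (Fin n → ℝ) → ℝ) (q : Idx n) :
    ENNReal.ofReal ((2:ℝ) ^ (-q.1)) ^ (α - (m:ℝ) * n) * ∏ j, FF f j q
      = ENNReal.ofReal ((2:ℝ) ^ (-q.1)) ^ α * qw f q := by
  have hℓ0 := ell_ne_zero q.1
  have hℓt := ell_ne_top q.1
  have hqw : qw f q = ((volume (idxCube q))⁻¹) ^ m * ∏ j, FF f j q := by
    rw [qw, Finset.prod_mul_distrib, Finset.prod_const, Finset.card_univ, Fintype.card_fin]
  have hinv : ((volume (idxCube q))⁻¹) ^ m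
      = ENNReal.ofReal ((2:ℝ) ^ (-q.1)) ^ (-((m:ℝ) * n)) := by
    rw [volume_idxCube, ← ENNReal.rpow_natCast (ENNReal.ofReal ((2:ℝ) ^ (-q.1))) n,
      ← ENNReal.rpow_neg, ← ENNReal.rpow_natCast
        (ENNReal.ofReal ((2:ℝ) ^ (-q.1)) ^ (-(n:ℝ))) m, ← ENNReal.rpow_mul]
    congr 1
    push_cast; ring
  rw [hqw, hinv, ← mul_assoc, ← ENNReal.rpow_add _ _ hℓ0 hℓt,
    show α + -((m:ℝ) * n) = α - (m:ℝ) * n by ring]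

lemma vol_rpow (hn : 0 < n) (α : ℝ) (q : Idx n) :
    volume (idxCube q) ^ (α / (n:ℝ)) = ENNReal.ofReal ((2:ℝ) ^ (-q.1)) ^ α := by
  rw [volume_idxCube, ← ENNReal.rpow_natCast (ENNReal.ofReal ((2:ℝ) ^ (-q.1))) n,
    ← ENNReal.rpow_mul]
  congr 1
  field_simp

lemma rhs_term_eq (hn : 0 < n) {α : ℝ} {f : Fin m → (Fin n → ℝ) → ℝ}
    (hf0 : ∀ j x, 0 ≤ f j x) (q : Idx n) :
    volume (idxCube q) ^ (α / (n:ℝ)) *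
        ∏ j, (volume (idxCube q))⁻¹ * ∫⁻ y in idxCube q, ENNReal.ofReal (f j y)
      = ENNReal.ofReal ((2:ℝ) ^ (-q.1)) ^ α * qw f q := by
  rw [vol_rpow hn, qw]
  congr 1
  refine Finset.prod_congr rfl fun j _ => ?_
  congr 1
  refine lintegral_congr fun y => ?_
  rw [abs_of_nonneg (hf0 j y)]

lemma ell_split (α : ℝ) {j k : ℤ} (h : j ≤ k) :
    (ENNReal.ofReal ((2:ℝ) ^ (-k))) ^ α =
      (ENNReal.ofReal ((2:ℝ) ^ (-α))) ^ ((k - j).toNat) *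
        (ENNReal.ofReal ((2:ℝ) ^ (-j))) ^ α := by
  have h2k : (0:ℝ) < 2 ^ (-k) := twopow_pos _
  have h2j : (0:ℝ) < 2 ^ (-j) := twopow_pos _
  have h2α : (0:ℝ) ≤ (2:ℝ) ^ (-α) := Real.rpow_nonneg (by norm_num) _
  rw [ENNReal.ofReal_rpow_of_pos h2k, ENNReal.ofReal_rpow_of_pos h2j,
    ← ENNReal.ofReal_pow h2α, ← ENNReal.ofReal_mul (by positivity)]
  congr 1
  have hd : (((k - j).toNat : ℕ) : ℝ) = (k:ℝ) - j := by
    have h' : (((k - j).toNat : ℕ) : ℤ) = k - j := Int.toNat_of_nonneg (by omega)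
    exact_mod_cast congrArg (Int.cast : ℤ → ℝ) h'
  rw [← Real.rpow_intCast 2 (-k), ← Real.rpow_intCast 2 (-j),
    ← Real.rpow_natCast ((2:ℝ) ^ (-α)) ((k - j).toNat),
    ← Real.rpow_mul (by norm_num : (0:ℝ) ≤ 2), ← Real.rpow_mul (by norm_num : (0:ℝ) ≤ 2),
    ← Real.rpow_mul (by norm_num : (0:ℝ) ≤ 2), ← Real.rpow_add (by norm_num : (0:ℝ) < 2)]
  congr 1
  push_cast
  rw [hd]
  ring

/-! ## Chain representation of the dyadic fractional integral -/

def cIdx (k : ℤ) (x : Fin n → ℝ) : Idx n := (k, flr k x)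

lemma mem_cIdx (k : ℤ) (x : Fin n → ℝ) : x ∈ idxCube (cIdx k x) := mem_flr k x


lemma lhs_eq (α : ℝ) (f : Fin m → (Fin n → ℝ) → ℝ) (x : Fin n → ℝ) :
    dyadicFracIntegral α f x =
      ∑' k : ℤ, ENNReal.ofReal ((2:ℝ) ^ (-k)) ^ (α - (m:ℝ) * n) *
        ∏ j, FF f j (cIdx k x) := by
  have hrepr : dyadicFracIntegral α f x = ∑' qk : ℤ × (Fin n → ℤ),
      (fun (k : ℤ) (mv : Fin n → ℤ) => (dyadicCube k mv).indicator
        (fun _ => ENNReal.ofReal ((2 : ℝ) ^ (-k)) ^ (α - (m : ℝ) * n) *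
          ∏ j, ∫⁻ y in dyadicCube k mv, ENNReal.ofReal |f j y|) x) qk.1 qk.2 := rfl
  rw [hrepr, ENNReal.tsum_prod (f := fun (k : ℤ) (mv : Fin n → ℤ) =>
    (dyadicCube k mv).indicator
      (fun _ => ENNReal.ofReal ((2 : ℝ) ^ (-k)) ^ (α - (m : ℝ) * n) *
        ∏ j, ∫⁻ y in dyadicCube k mv, ENNReal.ofReal |f j y|) x)]
  refine tsum_congr fun k => ?_
  rw [tsum_eq_single (flr k x)
    (fun mv hmv => Set.indicator_of_notMem (fun hx => hmv (eq_flr_of_mem hx)) _),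
    Set.indicator_of_mem (mem_flr k x)]
  rfl


lemma good_case (hn : 0 < n) (hm : 0 < m) {α : ℝ} (hα0 : 0 < α)
    {f : Fin m → (Fin n → ℝ) → ℝ} (hfi : ∀ j, LocallyIntegrable (f j) volume)
    (x : Fin n → ℝ) (hgood : ¬ Bad f (sgn x)) :
    dyadicFracIntegral α f x ≤ (Lam m n * (1 - ENNReal.ofReal ((2:ℝ) ^ (-α)))⁻¹) *
      ∑' j : ℤ, Set.indicator {j' : ℤ | cIdx j' x ∈ Sel f}
        (fun j' => ENNReal.ofReal ((2:ℝ) ^ (-j')) ^ α * qw f (cIdx j' x)) j := by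
  classical
  set r := ENNReal.ofReal ((2:ℝ) ^ (-α)) with hrdef
  set vstar := Set.indicator {j' : ℤ | cIdx j' x ∈ Sel f}
    (fun j' => ENNReal.ofReal ((2:ℝ) ^ (-j')) ^ α * qw f (cIdx j' x)) with hvstar
  have main : ∀ k : ℤ, ∃ p : ℤ × ℕ, p.1 + (p.2:ℤ) = k ∧
      ENNReal.ofReal ((2:ℝ) ^ (-k)) ^ (α - (m:ℝ) * n) * ∏ j, FF f j (cIdx k x) ≤
        Lam m n * (r ^ p.2 * vstar p.1) := by
    intro k
    by_cases hv : ENNReal.ofReal ((2:ℝ) ^ (-k)) ^ (α - (m:ℝ) * n) *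
        ∏ j, FF f j (cIdx k x) = 0
    · exact ⟨(k, 0), by simp, by rw [hv]; exact zero_le⟩
    · have hterm : ENNReal.ofReal ((2:ℝ) ^ (-k)) ^ (α - (m:ℝ) * n) * ∏ j, FF f j (cIdx k x)
          = ENNReal.ofReal ((2:ℝ) ^ (-k)) ^ α * qw f (cIdx k x) := term_eq hn α f (cIdx k x)
      have hwk0 : qw f (cIdx k x) ≠ 0 := fun h0 => hv (by rw [hterm, h0, mul_zero])
      have hwkt : qw f (cIdx k x) ≠ ⊤ := qw_ne_top hn hfi _
      obtain ⟨ν, hν⟩ := ENNReal.exists_mem_Ico_zpow hwk0 hwkt (one_lt_Lam hm hn)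
        (Lam_ne_top hm)
      obtain ⟨hν1, hν2⟩ := hν
      set P : ℤ → Prop := fun j => j ≤ k ∧ Lam m n ^ ν ≤ qw f (cIdx j x) with hP
      have hPk : P k := ⟨le_rfl, hν1⟩
      have hbdd : ∃ b : ℤ, ∀ z : ℤ, P z → b ≤ z := by
        by_contra hun
        push_neg at hun
        obtain ⟨j0, hj00, hj0⟩ := exists_small_gen x
        apply hgood
        refine ⟨ν, fun k0 => ?_⟩
        obtain ⟨z, hz, hzlt⟩ := hun (min k0 j0)
        refine ⟨z, le_of_lt (lt_of_lt_of_le hzlt (min_le_left _ _)), ?_⟩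
        have hflr : flr z x = sgn x :=
          flr_small (hj0 z (le_of_lt (lt_of_lt_of_le hzlt (min_le_right _ _))))
        have heq : cIdx z x = ((z, sgn x) : Idx n) := by rw [cIdx, hflr]
        rw [← heq]
        exact hz.2
      obtain ⟨js, hjsP, hjsmin⟩ := Int.exists_least_of_bdd hbdd ⟨k, hPk⟩
      have hjsk : js ≤ k := hjsP.1
      have hSel : cIdx js x ∈ Sel f := by
        refine Or.inr ⟨⟨ν, hjsP.2, fun q' hq' => ?_⟩, ?_⟩
        · have hxq' : x ∈ idxCube q' := hq'.subset (mem_cIdx js x)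
          have hq'eq : q' = cIdx q'.1 x := Prod.ext rfl (eq_flr_of_mem hxq')
          have hgen : q'.1 < js := gen_lt_of_ssubset hn hq'
          by_contra hge
          push_neg at hge
          have hPq : P q'.1 := ⟨by omega, by rw [← hq'eq]; exact hge⟩
          exact absurd (hjsmin _ hPq) (by omega)
        · have hsg : sgnIdx ((cIdx js x).2) = sgn x := sgnIdx_flr js x
          rw [hsg]
          exact hgood
      have hvs : vstar js = ENNReal.ofReal ((2:ℝ) ^ (-js)) ^ α * qw f (cIdx js x) :=
        Set.indicator_of_mem (show js ∈ {j' : ℤ | cIdx j' x ∈ Sel f} from hSel) _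
      refine ⟨(js, (k - js).toNat), by rw [Int.toNat_of_nonneg (by omega)]; ring, ?_⟩
      rw [hterm, hvs]
      calc ENNReal.ofReal ((2:ℝ) ^ (-k)) ^ α * qw f (cIdx k x)
          ≤ ENNReal.ofReal ((2:ℝ) ^ (-k)) ^ α * Lam m n ^ (ν+1) :=
            mul_le_mul_right hν2.le _
        _ = r ^ ((k-js).toNat) * ENNReal.ofReal ((2:ℝ) ^ (-js)) ^ α *
              (Lam m n * Lam m n ^ ν) := by
            rw [ell_split α hjsk, ENNReal.zpow_add Lam_ne_zero (Lam_ne_top hm) ν 1, zpow_one]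
            ring
        _ ≤ r ^ ((k-js).toNat) * ENNReal.ofReal ((2:ℝ) ^ (-js)) ^ α *
              (Lam m n * qw f (cIdx js x)) := by
            gcongr
            exact hjsP.2
        _ = Lam m n * (r ^ ((k-js).toNat) *
              (ENNReal.ofReal ((2:ℝ) ^ (-js)) ^ α * qw f (cIdx js x))) := by ring
  rw [lhs_eq]
  choose p hp1 hp2 using main
  have hinj : Function.Injective p := by
    intro a b hab
    have ha := hp1 a
    have hb := hp1 b
    rw [hab] at ha
    omega
  calc ∑' k : ℤ, ENNReal.ofReal ((2:ℝ) ^ (-k)) ^ (α - (m:ℝ) * n) * ∏ j, FF f j (cIdx k x)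
      ≤ ∑' k : ℤ, Lam m n * (r ^ (p k).2 * vstar (p k).1) := ENNReal.tsum_le_tsum hp2
    _ ≤ ∑' pp : ℤ × ℕ, Lam m n * (r ^ pp.2 * vstar pp.1) :=
        ENNReal.tsum_comp_le_tsum_of_injective hinj _
    _ = ∑' a : ℤ, ∑' b : ℕ, Lam m n * (r ^ b * vstar a) :=
        ENNReal.tsum_prod (f := fun (a : ℤ) (b : ℕ) => Lam m n * (r ^ b * vstar a))
    _ = ∑' a : ℤ, (Lam m n * vstar a) * (1 - r)⁻¹ := by
        refine tsum_congr fun a => ?_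
        calc ∑' b : ℕ, Lam m n * (r ^ b * vstar a)
            = ∑' b : ℕ, (Lam m n * vstar a) * r ^ b := tsum_congr fun b => by ring
          _ = (Lam m n * vstar a) * ∑' b : ℕ, r ^ b := ENNReal.tsum_mul_left
          _ = (Lam m n * vstar a) * (1 - r)⁻¹ := by rw [ENNReal.tsum_geometric]
    _ = (Lam m n * (1 - r)⁻¹) * ∑' j : ℤ, vstar j := by
        rw [← ENNReal.tsum_mul_left]
        refine tsum_congr fun a => by ring

lemma bad_case (hm : 0 < m) {α : ℝ} (hα0 : 0 < α) {f : Fin m → (Fin n → ℝ) → ℝ}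
    (x : Fin n → ℝ) (hbad : Bad f (sgn x)) (g : ↥(Sel f) → ℝ≥0∞)
    (hg : ∀ S : ↥(Sel f), x ∈ idxCube S.1 →
      ENNReal.ofReal ((2:ℝ) ^ (-S.1.1)) ^ α * qw f S.1 ≤ g S) :
    ∑' S, g S = ⊤ := by
  classical
  have hB : Bad f (sgn x) := hbad
  obtain ⟨ν, hν⟩ := hbad
  obtain ⟨j0, hj00, hj0⟩ := exists_small_gen x
  have step : ∀ b : ℤ, ∃ j : ℤ, j ≤ b ∧ j ≤ j0 ∧
      Lam m n ^ ν ≤ qw f ((j, sgn x) : Idx n) := by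
    intro b
    obtain ⟨j, hj1, hj2⟩ := hν (min b j0)
    exact ⟨j, le_trans hj1 (min_le_left _ _), le_trans hj1 (min_le_right _ _), hj2⟩
  set u : ℕ → ℤ := fun i => Nat.rec (Classical.choose (step j0))
    (fun _ ih => Classical.choose (step (ih - 1))) i with hu
  have hu0 := Classical.choose_spec (step j0)
  have huS : ∀ i : ℕ, u (i+1) ≤ u i - 1 ∧ u (i+1) ≤ j0 ∧
      Lam m n ^ ν ≤ qw f ((u (i+1), sgn x) : Idx n) :=
    fun i => Classical.choose_spec (step (u i - 1))
  have hu_j0 : ∀ i, u i ≤ j0 := by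
    intro i
    cases i with
    | zero => exact hu0.1
    | succ i => exact (huS i).2.1
  have hu_q : ∀ i, Lam m n ^ ν ≤ qw f ((u i, sgn x) : Idx n) := by
    intro i
    cases i with
    | zero => exact hu0.2.2
    | succ i => exact (huS i).2.2
  have hanti : StrictAnti u := strictAnti_nat_of_succ_lt fun i => by
    have := (huS i).1; omega
  have hmem : ∀ i, ((u i, sgn x) : Idx n) ∈ Sel f := fun i => Or.inl ⟨sgnIdx_sgn x, hB⟩
  have hxmem : ∀ i, x ∈ idxCube ((u i, sgn x) : Idx n) := by
    intro i
    have hflr : flr (u i) x = sgn x := flr_small (hj0 (u i) (hu_j0 i))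
    show x ∈ dyadicCube (u i) (sgn x)
    rw [← hflr]
    exact mem_flr (u i) x
  set ι : ℕ → ↥(Sel f) := fun i => ⟨((u i, sgn x) : Idx n), hmem i⟩ with hι
  have hιinj : Function.Injective ι := by
    intro a b hab
    have : u a = u b := congrArg (fun S : ↥(Sel f) => S.1.1) hab
    exact hanti.injective this
  have hterm : ∀ i, Lam m n ^ ν ≤ g (ι i) := by
    intro i
    refine le_trans ?_ (hg (ι i) (hxmem i))
    have h2 : (1:ℝ) ≤ (2:ℝ) ^ (-(u i)) := by
      have h := twopow_le (show (0:ℤ) ≤ -(u i) by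
        have := hu_j0 i; omega)
      simpa using h
    have h3 : (1:ℝ≥0∞) ≤ ENNReal.ofReal ((2:ℝ) ^ (-(u i))) := by
      rw [← ENNReal.ofReal_one]
      exact ENNReal.ofReal_le_ofReal h2
    have h1 : (1:ℝ≥0∞) ≤ ENNReal.ofReal ((2:ℝ) ^ (-(u i))) ^ α := by
      calc (1:ℝ≥0∞) = 1 ^ α := (ENNReal.one_rpow α).symm
        _ ≤ _ := ENNReal.rpow_le_rpow h3 hα0.le
    calc Lam m n ^ ν = 1 * Lam m n ^ ν := (one_mul _).symm
      _ ≤ ENNReal.ofReal ((2:ℝ) ^ (-(u i))) ^ α * qw f ((u i, sgn x) : Idx n) :=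
          mul_le_mul' h1 (hu_q i)
  have htop : (⊤:ℝ≥0∞) ≤ ∑' S, g S := by
    calc (⊤:ℝ≥0∞) = ∑' _ : ℕ, Lam m n ^ ν :=
        (ENNReal.tsum_const_eq_top_of_ne_zero
          (zpow_pos' Lam_ne_zero (Lam_ne_top hm) ν).ne').symm
      _ ≤ ∑' i : ℕ, g (ι i) := ENNReal.tsum_le_tsum hterm
      _ ≤ ∑' S, g S := ENNReal.tsum_comp_le_tsum_of_injective hιinj g
  exact top_le_iff.mp htop


/-! ## Sparse geometry helpers -/

lemma canon_mono {σ : Fin n → ℤ} (hσ : sgnIdx σ = σ) {k k' : ℤ} (h : k ≤ k') :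
    idxCube ((k', σ) : Idx n) ⊆ idxCube ((k, σ) : Idx n) := by
  intro y hy i
  have h1 := mem_cube_spec hy i
  dsimp only at h1 ⊢
  have hσi : σ i = 0 ∨ σ i = -1 := by
    have hc := congrFun hσ i
    rw [sgnIdx] at hc
    by_cases h0 : 0 ≤ σ i
    · rw [if_pos h0] at hc; exact Or.inl hc.symm
    · rw [if_neg h0] at hc; exact Or.inr hc.symm
  have hle : (2:ℝ) ^ (-k') ≤ 2 ^ (-k) := twopow_le (by omega)
  have hp : (0:ℝ) < 2 ^ (-k') := twopow_pos _
  rcases hσi with h0 | h0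
  · rw [h0] at h1 ⊢
    push_cast at h1 ⊢
    constructor
    · linarith [h1.1]
    · linarith [h1.2]
  · rw [h0] at h1 ⊢
    push_cast at h1 ⊢
    constructor
    · linarith [h1.1]
    · linarith [h1.2]

lemma vol_succ (hn : 0 < n) (k : ℤ) (mv mv' : Fin n → ℤ) :
    volume (idxCube ((k + 1, mv') : Idx n)) ≤ 2⁻¹ * volume (idxCube ((k, mv) : Idx n)) := by
  rw [volume_idxCube, volume_idxCube]
  have e : (2:ℝ) ^ (-((k:ℤ)+1)) = 2⁻¹ * 2 ^ (-k) := by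
    rw [show -(k+1) = (-1) + -k by ring, zpow_add₀ (two_ne_zero), zpow_neg_one]
  show ENNReal.ofReal ((2:ℝ) ^ (-(k+1))) ^ n ≤ 2⁻¹ * ENNReal.ofReal ((2:ℝ) ^ (-k)) ^ n
  rw [e, ENNReal.ofReal_mul (by norm_num), mul_pow]
  have h1 : ENNReal.ofReal ((2:ℝ)⁻¹) = 2⁻¹ := by
    rw [ENNReal.ofReal_inv_of_pos (by norm_num), ENNReal.ofReal_ofNat]
  rw [h1]
  have h2 : ((2:ℝ≥0∞)⁻¹) ^ n ≤ 2⁻¹ :=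
    pow_le_of_le_one zero_le (ENNReal.inv_le_one.mpr one_le_two) hn.ne'
  exact mul_le_mul_left h2 _

lemma diff_half {A B : Set (Fin n → ℝ)} (hAtop : volume A ≠ ⊤)
    (hB : volume B ≤ 2⁻¹ * volume A) :
    ENNReal.ofReal (1/2) * volume A ≤ volume (A \ B) := by
  have hsub : A ⊆ (A \ B) ∪ B := fun y hy => by
    by_cases h : y ∈ B
    · exact Or.inr h
    · exact Or.inl ⟨hy, h⟩
  have h1 : volume A ≤ volume (A \ B) + 2⁻¹ * volume A :=
    le_trans (measure_mono hsub) (le_trans (measure_union_le _ _) (by gcongr))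
  have hhalf : ENNReal.ofReal (1/2 : ℝ) = 2⁻¹ := by
    rw [one_div, ENNReal.ofReal_inv_of_pos (by norm_num), ENNReal.ofReal_ofNat]
  rw [hhalf]
  have h2 : volume A - 2⁻¹ * volume A ≤ volume (A \ B) := tsub_le_iff_right.mpr h1
  have h3 : volume A - 2⁻¹ * volume A = 2⁻¹ * volume A := by
    have e : 2⁻¹ * volume A = volume A / 2 := by rw [div_eq_mul_inv, mul_comm]
    rw [e, ENNReal.sub_half hAtop]
  rwa [h3] at h2

lemma quad_disj {a b : Idx n} (h : sgnIdx a.2 ≠ sgnIdx b.2) :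
    Disjoint (idxCube a) (idxCube b) := by
  rw [Set.disjoint_left]
  intro y hy hy'
  exact h ((sgn_of_mem hy).symm.trans (sgn_of_mem hy'))


theorem main_result (hn : 0 < n) (m : ℕ) (hm : 0 < m) (α : ℝ)
    (hα0 : 0 < α) (hα : α < (m : ℝ) * n) :
    ∃ (η : ℝ) (C : ℝ≥0∞), 0 < η ∧ η < 1 ∧ 0 < C ∧ C < ∞ ∧
      ∀ f : Fin m → (Fin n → ℝ) → ℝ,
        (∀ j x, 0 ≤ f j x) → (∀ j, LocallyIntegrable (f j) volume) →
        ∃ (𝒮 : Set (ℤ × (Fin n → ℤ))) (E : ℤ × (Fin n → ℤ) → Set (Fin n → ℝ)),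
          (∀ S ∈ 𝒮, MeasurableSet (E S) ∧ E S ⊆ dyadicCube S.1 S.2 ∧
            ENNReal.ofReal η * volume (dyadicCube S.1 S.2) ≤ volume (E S)) ∧
          𝒮.PairwiseDisjoint E ∧
          ∀ x : Fin n → ℝ,
            dyadicFracIntegral α f x ≤
              C * ∑' S : 𝒮,
                (dyadicCube S.1.1 S.1.2).indicator
                  (fun _ => volume (dyadicCube S.1.1 S.1.2) ^ (α / (n : ℝ)) *
                    ∏ j, (volume (dyadicCube S.1.1 S.1.2))⁻¹ *
                      ∫⁻ y in dyadicCube S.1.1 S.1.2, ENNReal.ofReal (f j y)) x := by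
  classical
  set r := ENNReal.ofReal ((2:ℝ) ^ (-α)) with hrdef
  have hr1 : r < 1 := by
    rw [hrdef]
    exact ENNReal.ofReal_lt_one.mpr
      (Real.rpow_lt_one_of_one_lt_of_neg one_lt_two (by linarith))
  have hC0 : 0 < Lam m n * (1 - r)⁻¹ := by
    refine ENNReal.mul_pos Lam_ne_zero (ENNReal.inv_ne_zero.mpr ?_)
    exact (tsub_le_self.trans_lt ENNReal.one_lt_top).ne
  have hCtop : Lam m n * (1 - r)⁻¹ < ⊤ := by
    refine ENNReal.mul_lt_top (Lam_ne_top hm).lt_top ?_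
    rw [ENNReal.inv_lt_top]
    exact tsub_pos_of_lt hr1
  refine ⟨1/2, Lam m n * (1 - r)⁻¹, by norm_num, by norm_num, hC0, hCtop, ?_⟩
  intro f hf0 hfi
  set E : Idx n → Set (Fin n → ℝ) := fun q =>
    if sgnIdx q.2 = q.2 ∧ Bad f q.2 then idxCube q \ idxCube ((q.1 + 1, q.2) : Idx n)
    else idxCube q \ Heavy f q with hE
  have hEsub : ∀ q, E q ⊆ idxCube q := by
    intro q
    rw [hE]
    dsimp only
    split
    · exact Set.diff_subset
    · exact Set.diff_subset
  refine ⟨Sel f, E, ?_, ?_, ?_⟩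
  · -- measurability, subset, volume
    intro S hS
    by_cases hcan : sgnIdx S.2 = S.2 ∧ Bad f S.2
    · have hES : E S = idxCube S \ idxCube ((S.1 + 1, S.2) : Idx n) := by
        rw [hE]; dsimp only; rw [if_pos hcan]
      rw [hES]
      exact ⟨(measurableSet_idxCube S).diff (measurableSet_idxCube _), Set.diff_subset,
        diff_half (volume_idxCube_ne_top S) (vol_succ hn S.1 S.2 S.2)⟩
    · have hstop : S ∈ Stop f ∧ ¬ Bad f (sgnIdx S.2) := hS.resolve_left hcan
      have hES : E S = idxCube S \ Heavy f S := by
        rw [hE]; dsimp only; rw [if_neg hcan]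
      rw [hES]
      exact ⟨(measurableSet_idxCube S).diff (measurableSet_heavy f S), Set.diff_subset,
        diff_half (volume_idxCube_ne_top S) (heavy_vol hn hm hfi hstop.1)⟩
  · -- pairwise disjoint
    intro a ha b hb hab
    have key_can : ∀ p q : Idx n, p ∈ Sel f → q ∈ Sel f →
        (sgnIdx p.2 = p.2 ∧ Bad f p.2) → (sgnIdx q.2 = q.2 ∧ Bad f q.2) →
        p.2 = q.2 → p.1 < q.1 → Disjoint (E p) (E q) := by
      intro p q hp hq cp cq hσ hlt
      have hEp : E p = idxCube p \ idxCube ((p.1 + 1, p.2) : Idx n) := by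
        rw [hE]; dsimp only; rw [if_pos cp]
      have hsubq : idxCube q ⊆ idxCube ((p.1 + 1, p.2) : Idx n) := by
        have : idxCube ((q.1, p.2) : Idx n) ⊆ idxCube ((p.1 + 1, p.2) : Idx n) :=
          canon_mono cp.1 (by omega)
        rw [show ((q.1, p.2) : Idx n) = q by rw [hσ]] at this
        exact this
      rw [Set.disjoint_left]
      rintro z hz hz'
      rw [hEp] at hz
      exact hz.2 (hsubq (hEsub q hz'))
    by_cases ca : sgnIdx a.2 = a.2 ∧ Bad f a.2
    · by_cases cb : sgnIdx b.2 = b.2 ∧ Bad f b.2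
      · by_cases hσ : a.2 = b.2
        · have hk : a.1 ≠ b.1 := by
            intro h
            exact hab (Prod.ext h hσ)
          rcases lt_or_gt_of_ne hk with h | h
          · exact key_can a b ha hb ca cb hσ h
          · exact (key_can b a hb ha cb ca hσ.symm h).symm
        · have : sgnIdx a.2 ≠ sgnIdx b.2 := by rw [ca.1, cb.1]; exact hσ
          exact Set.disjoint_of_subset (hEsub a) (hEsub b) (quad_disj this)
      · have hbstop : b ∈ Stop f ∧ ¬ Bad f (sgnIdx b.2) := hb.resolve_left cb
        have hne : sgnIdx a.2 ≠ sgnIdx b.2 := by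
          intro h
          apply hbstop.2
          rw [← h, ca.1]
          exact ca.2
        exact Set.disjoint_of_subset (hEsub a) (hEsub b) (quad_disj hne)
    · have hastop : a ∈ Stop f ∧ ¬ Bad f (sgnIdx a.2) := ha.resolve_left ca
      by_cases cb : sgnIdx b.2 = b.2 ∧ Bad f b.2
      · have hne : sgnIdx a.2 ≠ sgnIdx b.2 := by
          intro h
          apply hastop.2
          rw [h, cb.1]
          exact cb.2
        exact Set.disjoint_of_subset (hEsub a) (hEsub b) (quad_disj hne)
      · have hbstop : b ∈ Stop f ∧ ¬ Bad f (sgnIdx b.2) := hb.resolve_left cb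
        have key_stop : ∀ p q : Idx n, p ∈ Stop f → q ∈ Stop f →
            (sgnIdx q.2 = q.2 ∧ Bad f q.2 → False) →
            idxCube p ⊂ idxCube q → Disjoint (E p) (E q) := by
          intro p q hp hq hcq hss
          have hEq : E q = idxCube q \ Heavy f q := by
            rw [hE]; dsimp only; rw [if_neg hcq]
          have hsub : idxCube p ⊆ Heavy f q := stop_nested_subset_heavy hn hm hfi hq hp hss
          rw [Set.disjoint_left]
          rintro z hz hz'
          rw [hEq] at hz'
          exact hz'.2 (hsub (hEsub p hz))
        rcases nested_or_disjoint a b with h | h | h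
        · have hss : idxCube a ⊂ idxCube b := by
            refine h.ssubset_of_ne fun he => hab (idxCube_inj hn he)
          exact key_stop a b hastop.1 hbstop.1 cb hss
        · have hss : idxCube b ⊂ idxCube a := by
            refine h.ssubset_of_ne fun he => hab (idxCube_inj hn he.symm)
          exact (key_stop b a hbstop.1 hastop.1 ca hss).symm
        · exact Set.disjoint_of_subset (hEsub a) (hEsub b) h
  · -- pointwise domination
    intro x
    set h : ↥(Sel f) → ℝ≥0∞ := fun S =>
      (dyadicCube S.1.1 S.1.2).indicator
        (fun _ => volume (dyadicCube S.1.1 S.1.2) ^ (α / (n : ℝ)) *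
          ∏ j, (volume (dyadicCube S.1.1 S.1.2))⁻¹ *
            ∫⁻ y in dyadicCube S.1.1 S.1.2, ENNReal.ofReal (f j y)) x with hh
    by_cases hbad : Bad f (sgn x)
    · have htop : ∑' S, h S = ⊤ := by
        refine bad_case hm hα0 x hbad h fun S hx => ?_
        rw [hh]
        dsimp only
        rw [Set.indicator_of_mem (show x ∈ dyadicCube S.1.1 S.1.2 from hx)]
        exact (rhs_term_eq hn hf0 S.1).ge
      calc dyadicFracIntegral α f x ≤ ⊤ := le_top
        _ = Lam m n * (1 - r)⁻¹ * ⊤ := (ENNReal.mul_top hC0.ne').symm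
        _ = Lam m n * (1 - r)⁻¹ * ∑' S, h S := by rw [htop]
    · have hmain := good_case hn hm hα0 hfi x hbad
      refine le_trans hmain (mul_le_mul_right ?_ _)
      rw [← tsum_subtype {j' : ℤ | cIdx j' x ∈ Sel f}
        (fun j' => ENNReal.ofReal ((2:ℝ) ^ (-j')) ^ α * qw f (cIdx j' x))]
      set ι : ↥{j' : ℤ | cIdx j' x ∈ Sel f} → ↥(Sel f) := fun j => ⟨cIdx j.1 x, j.2⟩ with hι
      have hιinj : Function.Injective ι := by
        intro p q hpq
        have : cIdx p.1 x = cIdx q.1 x := congrArg Subtype.val hpq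
        exact Subtype.ext (congrArg Prod.fst this)
      have hcongr : ∀ j : ↥{j' : ℤ | cIdx j' x ∈ Sel f},
          ENNReal.ofReal ((2:ℝ) ^ (-j.1)) ^ α * qw f (cIdx j.1 x) = h (ι j) := by
        intro j
        rw [hh, hι]
        dsimp only
        rw [Set.indicator_of_mem
          (show x ∈ dyadicCube (cIdx j.1 x).1 (cIdx j.1 x).2 from mem_cIdx j.1 x)]
        exact (rhs_term_eq hn hf0 (cIdx j.1 x)).symm
      calc ∑' j : ↥{j' : ℤ | cIdx j' x ∈ Sel f},
            ENNReal.ofReal ((2:ℝ) ^ (-j.1)) ^ α * qw f (cIdx j.1 x)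
          = ∑' j : ↥{j' : ℤ | cIdx j' x ∈ Sel f}, h (ι j) := tsum_congr hcongr
        _ ≤ ∑' S, h S := ENNReal.tsum_comp_le_tsum_of_injective hιinj h


end SpAux

theorem statement4 (hn : 0 < n) (m : ℕ) (hm : 0 < m) (α : ℝ)
    (hα0 : 0 < α) (hα : α < (m : ℝ) * n) :
    ∃ (η : ℝ) (C : ℝ≥0∞), 0 < η ∧ η < 1 ∧ 0 < C ∧ C < ∞ ∧
      ∀ f : Fin m → (Fin n → ℝ) → ℝ,
        (∀ j x, 0 ≤ f j x) → (∀ j, LocallyIntegrable (f j) volume) →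
        ∃ (𝒮 : Set (ℤ × (Fin n → ℤ))) (E : ℤ × (Fin n → ℤ) → Set (Fin n → ℝ)),
          (∀ S ∈ 𝒮, MeasurableSet (E S) ∧ E S ⊆ dyadicCube S.1 S.2 ∧
            ENNReal.ofReal η * volume (dyadicCube S.1 S.2) ≤ volume (E S)) ∧
          𝒮.PairwiseDisjoint E ∧
          ∀ x : Fin n → ℝ,
            dyadicFracIntegral α f x ≤
              C * ∑' S : 𝒮,
                (dyadicCube S.1.1 S.1.2).indicator
                  (fun _ => volume (dyadicCube S.1.1 S.1.2) ^ (α / (n : ℝ)) *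
                    ∏ j, (volume (dyadicCube S.1.1 S.1.2))⁻¹ *
                      ∫⁻ y in dyadicCube S.1.1 S.1.2, ENNReal.ofReal (f j y)) x := SpAux.main_result hn m hm α hα0 hα
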